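/- For a finite-dimensional Hopf *-algebra H, the antipode-star map on the quantum double satisfies (S ∘ *)(a⊗h) = S⁻³(a*) ⊗ S(h*), and consequently (S ∘ *)² = id on D(H). -/

import Mathlib

open scoped TensorProduct

/-- Interpret a list of pairs as a sum of pure tensors (Sweedler representation). -/
noncomputable def toT {A : Type} [AddCommMonoid A] [Module ℂ A] (l : List (A × A)) :
    A ⊗[ℂ] A := (l.map fun p => p.1 ⊗ₜ[ℂ] p.2).sum

/-- A threefold Sweedler representation `(x₍₁₎, x₍₂₎, x₍₃₎)` obtained by iterating `ρ`. -/
def tri {A : Type} (ρ : A → List (A × A)) (x : A) : List (A × A × A) :=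
  (ρ x).flatMap fun p => (ρ p.2).map fun q => (p.1, q.1, q.2)


noncomputable def T3 {M V : Type} [AddCommMonoid M] [Module ℂ M] [AddCommMonoid V] [Module ℂ V]
    (f1 f3 : M →ₗ[ℂ] ℂ) (m : M →ₗ[ℂ] V) : M →ₗ[ℂ] M →ₗ[ℂ] M →ₗ[ℂ] V :=
  LinearMap.mk₂ ℂ (fun s1 s2 => f1 s1 • (f3.smulRight (m s2)))
    (fun a b c => by simp [add_smul])
    (fun c a b => by simp [mul_smul])
    (fun a b c => by ext x; simp [smul_add])
    (fun c a b => by ext x; simp only [LinearMap.smulRight_apply, LinearMap.smul_apply,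
        map_smul, smul_smul]; congr 1; ring)

lemma T3_apply {M V : Type} [AddCommMonoid M] [Module ℂ M] [AddCommMonoid V] [Module ℂ V]
    (f1 f3 : M →ₗ[ℂ] ℂ) (m : M →ₗ[ℂ] V) (s1 s2 s3 : M) :
    T3 f1 f3 m s1 s2 s3 = (f1 s1 * f3 s3) • m s2 := by
  simp [T3, smul_smul]

lemma toT_uncurry {M V : Type} [AddCommMonoid M] [Module ℂ M] [AddCommMonoid V] [Module ℂ V]
    (B : M →ₗ[ℂ] M →ₗ[ℂ] V) (l : List (M × M)) :
    (l.map fun p => B p.1 p.2).sum = TensorProduct.uncurry (RingHom.id ℂ) M M V B (toT l) := by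
  induction l with
  | nil => simp [toT]
  | cons p l ih =>
      simp only [toT, List.map_cons, List.sum_cons, map_add, TensorProduct.uncurry_apply] at ih ⊢
      rw [ih]

lemma tri_uncurry {M V : Type} [AddCommMonoid M] [Module ℂ M] [AddCommMonoid V] [Module ℂ V]
    (ρ : M → List (M × M)) (Δ : M →ₗ[ℂ] M ⊗[ℂ] M) (hρ : ∀ y, Δ y = toT (ρ y))
    (T : M →ₗ[ℂ] M →ₗ[ℂ] M →ₗ[ℂ] V) (x : M) :
    ((tri ρ x).map fun s => T s.1 s.2.1 s.2.2).sum
      = TensorProduct.uncurry (RingHom.id ℂ) M (M ⊗[ℂ] M) V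
          ((TensorProduct.uncurry (RingHom.id ℂ) M M V).comp T) ((LinearMap.lTensor M Δ) (Δ x)) := by
  rw [tri, hρ]
  induction ρ x with
  | nil => simp [toT]
  | cons p l ih =>
      rw [List.flatMap_cons, List.map_append, List.sum_append, ih]
      have h1 : ((List.map (fun q => (p.1, q.1, q.2)) (ρ p.2)).map
          fun s : M × M × M => T s.1 s.2.1 s.2.2).sum
          = TensorProduct.uncurry (RingHom.id ℂ) M M V (T p.1) (Δ p.2) := by
        rw [List.map_map, hρ p.2, ← toT_uncurry]
        rfl
      have h2 : toT (p :: l) = p.1 ⊗ₜ[ℂ] p.2 + toT l := by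
        simp [toT]
      rw [h1, h2, map_add, map_add, LinearMap.lTensor_tmul, TensorProduct.uncurry_apply,
        LinearMap.comp_apply]

lemma antipode_one' {H : Type} [Ring H] [HopfAlgebra ℂ H] :
    HopfAlgebra.antipode (R := ℂ) (1 : H) = 1 := by
  have := HopfAlgebra.mul_antipode_rTensor_comul_apply (R := ℂ) (1 : H)
  simpa [Algebra.TensorProduct.one_def] using this

set_option maxHeartbeats 2000000 in
/-- For a finite-dimensional Hopf *-algebra `H`, the antipode-star map of the
quantum double `D(H)` (with *-structure `(a⊗h)* = (1⊗h*)((S²a)*⊗1)`, antipode restricting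
to `S` on `H` and to `S⁻¹` on `H^{*op}`) satisfies
`(S ∘ *)(a ⊗ h) = S⁻³(a*) ⊗ S(h*)`, and consequently `(S ∘ *)² = id` on `D(H)`. -/
theorem quantum_double_antipode_star
    {H A : Type} [Ring H] [HopfAlgebra ℂ H] [StarRing H] [StarModule ℂ H]
    [Ring A] [HopfAlgebra ℂ A] [StarRing A] [StarModule ℂ A]
    (ρH : H → List (H × H)) (ρA : A → List (A × A))
    (hρH : ∀ x, Coalgebra.comul (R := ℂ) x = toT (ρH x))
    (hρA : ∀ x, Coalgebra.comul (R := ℂ) x = toT (ρA x))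
    -- Hopf *-algebra axioms for H
    (hcomulStarH : ∀ x : H, Coalgebra.comul (R := ℂ) (star x)
        = toT ((ρH x).map fun p => (star p.1, star p.2)))
    (hcounitStarH : ∀ x : H, Coalgebra.counit (R := ℂ) (star x)
        = star (Coalgebra.counit (R := ℂ) (A := H) x))
    (hSstarH : ∀ x : H, HopfAlgebra.antipode (R := ℂ)
        (star (HopfAlgebra.antipode (R := ℂ) (star x))) = x)
    -- Hopf *-algebra axioms for A
    (hcomulStarA : ∀ x : A, Coalgebra.comul (R := ℂ) (star x)
        = toT ((ρA x).map fun p => (star p.1, star p.2)))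
    (hcounitStarA : ∀ x : A, Coalgebra.counit (R := ℂ) (star x)
        = star (Coalgebra.counit (R := ℂ) (A := A) x))
    (hSstarA : ∀ x : A, HopfAlgebra.antipode (R := ℂ)
        (star (HopfAlgebra.antipode (R := ℂ) (star x))) = x)
    -- the Hopf algebra duality pairing ⟨·,·⟩ : H × A → ℂ, nondegenerate
    (pair : H →ₗ[ℂ] A →ₗ[ℂ] ℂ)
    (hpairMulA : ∀ (h : H) (a b : A),
        pair h (a * b) = ((ρH h).map fun q => pair q.1 a * pair q.2 b).sum)
    (hpairMulH : ∀ (g h : H) (a : A),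
        pair (g * h) a = ((ρA a).map fun p => pair g p.1 * pair h p.2).sum)
    (hpairOneA : ∀ h : H, pair h 1 = Coalgebra.counit (R := ℂ) h)
    (hpairOneH : ∀ a : A, pair 1 a = Coalgebra.counit (R := ℂ) a)
    (hpairS : ∀ (h : H) (a : A),
        pair (HopfAlgebra.antipode (R := ℂ) h) a
          = pair h (HopfAlgebra.antipode (R := ℂ) a))
    (hpairStar : ∀ (h : H) (a : A), pair (star h) a
        = (starRingEnd ℂ) (pair h (star (HopfAlgebra.antipode (R := ℂ) a))))
    (hndH : ∀ h : H, (∀ a : A, pair h a = 0) → h = 0)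
    (hndA : ∀ a : A, (∀ h : H, pair h a = 0) → a = 0)
    -- the quantum double product on `D(H) = A ⊗ H`
    (mulD : (A ⊗[ℂ] H) →ₗ[ℂ] (A ⊗[ℂ] H) →ₗ[ℂ] (A ⊗[ℂ] H))
    (hmulD : ∀ (a : A) (h : H) (b : A) (g : H),
        mulD (a ⊗ₜ[ℂ] h) (b ⊗ₜ[ℂ] g)
          = ((tri ρA b).map fun p => ((tri ρH h).map fun s =>
              (pair (HopfAlgebra.antipode (R := ℂ) s.1) p.1 * pair s.2.2 p.2.2)
                • ((p.2.1 * a) ⊗ₜ[ℂ] (s.2.1 * g))).sum).sum)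
    -- the inverse of the antipode of `A`
    (SAinv : A → A)
    (hSAinv1 : ∀ a : A, SAinv (HopfAlgebra.antipode (R := ℂ) a) = a)
    (hSAinv2 : ∀ a : A, HopfAlgebra.antipode (R := ℂ) (SAinv a) = a)
    -- the *-structure of `D(H)`: `(a⊗h)* = (1⊗h*)((S²a)*⊗1)`
    (st : A ⊗[ℂ] H → A ⊗[ℂ] H)
    (hstAdd : ∀ x y, st (x + y) = st x + st y)
    (hstSmul : ∀ (c : ℂ) (x : A ⊗[ℂ] H), st (c • x) = (starRingEnd ℂ) c • st x)
    (hstMul : ∀ x y, st (mulD x y) = mulD (st y) (st x))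
    (hstGen : ∀ (a : A) (h : H),
        st (a ⊗ₜ[ℂ] h)
          = mulD ((1 : A) ⊗ₜ[ℂ] star h)
              (star (HopfAlgebra.antipode (R := ℂ) (HopfAlgebra.antipode (R := ℂ) a))
                ⊗ₜ[ℂ] (1 : H)))
    -- the antipode of `D(H)`: an antialgebra map restricting to `S` on `H` and `S⁻¹` on `A`
    (SD : (A ⊗[ℂ] H) →ₗ[ℂ] (A ⊗[ℂ] H))
    (hSDmul : ∀ x y, SD (mulD x y) = mulD (SD y) (SD x))
    (hSDA : ∀ a : A, SD (a ⊗ₜ[ℂ] (1 : H)) = SAinv a ⊗ₜ[ℂ] (1 : H))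
    (hSDH : ∀ h : H, SD ((1 : A) ⊗ₜ[ℂ] h)
        = (1 : A) ⊗ₜ[ℂ] HopfAlgebra.antipode (R := ℂ) h) :
    -- `(S ∘ *)(a⊗h) = S⁻³(a*) ⊗ S(h*)`, and `(S ∘ *)² = id`
    (∀ (a : A) (h : H),
        SD (st (a ⊗ₜ[ℂ] h))
          = SAinv (SAinv (SAinv (star a)))
              ⊗ₜ[ℂ] HopfAlgebra.antipode (R := ℂ) (star h)) ∧
    (∀ x : A ⊗[ℂ] H, SD (st (SD (st x))) = x) := by
  have hS1H : HopfAlgebra.antipode (R := ℂ) (1 : H) = 1 := antipode_one'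
  have comul1A : Coalgebra.comul (R := ℂ) (1 : A) = (1 : A) ⊗ₜ[ℂ] (1 : A) := by
    rw [Bialgebra.comul_one, Algebra.TensorProduct.one_def]
  have comul1H : Coalgebra.comul (R := ℂ) (1 : H) = (1 : H) ⊗ₜ[ℂ] (1 : H) := by
    rw [Bialgebra.comul_one, Algebra.TensorProduct.one_def]
  -- the key multiplication identity in the double
  have key : ∀ (b : A) (g : H), mulD (b ⊗ₜ[ℂ] (1 : H)) ((1 : A) ⊗ₜ[ℂ] g) = b ⊗ₜ[ℂ] g := by
    intro b g
    rw [hmulD]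
    have inner : ∀ p : A × A × A,
        ((tri ρH (1 : H)).map fun s =>
            (pair (HopfAlgebra.antipode (R := ℂ) s.1) p.1 * pair s.2.2 p.2.2)
              • ((p.2.1 * b) ⊗ₜ[ℂ] (s.2.1 * g))).sum
          = (Coalgebra.counit (R := ℂ) p.1 * Coalgebra.counit (R := ℂ) p.2.2)
              • ((p.2.1 * b) ⊗ₜ[ℂ] g) := by
      intro p
      have e : (fun s : H × H × H =>
          (pair (HopfAlgebra.antipode (R := ℂ) s.1) p.1 * pair s.2.2 p.2.2)
            • ((p.2.1 * b) ⊗ₜ[ℂ] (s.2.1 * g)))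
          = fun s => (T3 ((pair.flip p.1) ∘ₗ HopfAlgebra.antipode (R := ℂ))
              (pair.flip p.2.2)
              ((TensorProduct.mk ℂ A H (p.2.1 * b)) ∘ₗ LinearMap.mulRight ℂ g)) s.1 s.2.1 s.2.2 := by
        funext s
        simp [T3_apply]
      rw [e, tri_uncurry ρH _ hρH, comul1H, LinearMap.lTensor_tmul, comul1H,
        TensorProduct.uncurry_apply, LinearMap.comp_apply, TensorProduct.uncurry_apply,
        T3_apply]
      simp [hS1H, hpairOneH]
    simp only [inner]
    have e2 : (fun p : A × A × A =>
        (Coalgebra.counit (R := ℂ) p.1 * Coalgebra.counit (R := ℂ) p.2.2)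
          • ((p.2.1 * b) ⊗ₜ[ℂ] g))
        = fun p => (T3 (Coalgebra.counit (R := ℂ)) (Coalgebra.counit (R := ℂ))
            (((TensorProduct.mk ℂ A H).flip g) ∘ₗ LinearMap.mulRight ℂ b)) p.1 p.2.1 p.2.2 := by
      funext p
      simp [T3_apply]
    rw [e2, tri_uncurry ρA _ hρA, comul1A, LinearMap.lTensor_tmul, comul1A,
      TensorProduct.uncurry_apply, LinearMap.comp_apply, TensorProduct.uncurry_apply,
      T3_apply]
    simp
  -- antipode-star identities for A
  have hSinj : ∀ x y : A, HopfAlgebra.antipode (R := ℂ) x = HopfAlgebra.antipode (R := ℂ) y → x = y := by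
    intro x y hxy
    rw [← hSAinv1 x, hxy, hSAinv1]
  have hT : ∀ x : A, star (HopfAlgebra.antipode (R := ℂ) (star x)) = SAinv x := by
    intro x
    apply hSinj
    rw [hSstarA, hSAinv2]
  have hTs : ∀ x : A, SAinv (star x) = star (HopfAlgebra.antipode (R := ℂ) x) := by
    intro x
    rw [← hT (star x), star_star]
  have h3 : ∀ x : A, SAinv (SAinv (SAinv (star x)))
      = star (HopfAlgebra.antipode (R := ℂ) (HopfAlgebra.antipode (R := ℂ)
          (HopfAlgebra.antipode (R := ℂ) x))) := by
    intro x
    simp only [hTs]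
  have part1 : ∀ (a : A) (h : H), SD (st (a ⊗ₜ[ℂ] h))
      = SAinv (SAinv (SAinv (star a))) ⊗ₜ[ℂ] HopfAlgebra.antipode (R := ℂ) (star h) := by
    intro a h
    rw [hstGen, hSDmul, hSDA, hSDH, key]
    congr 1
    rw [h3 a, hTs]
  refine ⟨part1, ?_⟩
  have hst0 : st 0 = 0 := by
    have h := hstAdd 0 0
    rw [add_zero] at h
    exact (left_eq_add.mp h)
  intro x
  induction x using TensorProduct.induction_on with
  | zero => rw [hst0, map_zero, hst0, map_zero]
  | tmul a h =>
      rw [part1, part1]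
      congr 1
      · rw [h3 a, star_star, hSAinv1, hSAinv1, hSAinv1]
      · exact hSstarH h
  | add x y hx hy => rw [hstAdd, map_add, hstAdd, map_add, hx, hy]
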